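/- Fix n ≥ 1 and j with 0 ≤ j ≤ n. The number of permutations w ∈ S_{2n+1} with exactly n descents such that the lattice path L(w) has exactly j exceedances is independent of j, and equals A(n,2n+1)/(n+1). -/

import Mathlib

open scoped Classical

/-- Number of descents of `w` occurring among the first `ℓ` positions
(0-indexed: position `i` is a descent if `w i > w (i+1)`). -/
noncomputable def descentsIn {N : ℕ} (w : Equiv.Perm (Fin N)) (ℓ : ℕ) : ℕ :=
  ((Finset.range ℓ).filter (fun i =>
    ∃ h : i + 1 < N, w ⟨i + 1, h⟩ < w ⟨i, Nat.lt_of_succ_lt h⟩)).card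

/-- Total number of descents of a permutation of `[N]`. -/
noncomputable def descents {N : ℕ} (w : Equiv.Perm (Fin N)) : ℕ :=
  descentsIn w (N - 1)

/-- The Eulerian number `A(m, N)`: the number of permutations of `[N]`
with exactly `m` descents. -/
noncomputable def eulerian (m N : ℕ) : ℕ :=
  (Finset.univ.filter (fun w : Equiv.Perm (Fin N) => descents w = m)).card


/-- The exceedance of the lattice path `L(w)` of `w ∈ S_{2n+1}`: after `ℓ`
steps the path is at the point `(ℓ - d_ℓ, d_ℓ)` where `d_ℓ` is the number of
descents among the first `ℓ` positions; the exceedance is the number of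
`i ∈ {0,…,n}` such that the path contains a point `(i, i')` with `i' > i`. -/
noncomputable def excPath (n : ℕ) (w : Equiv.Perm (Fin (2 * n + 1))) : ℕ :=
  ((Finset.range (n + 1)).filter (fun i =>
    ∃ ℓ ∈ Finset.range (2 * n + 1),
      ℓ - descentsIn w ℓ = i ∧ i < descentsIn w ℓ)).card


namespace EC
open Finset


variable (D : ℕ → Prop)

/-- number of descents in window `[k, k+ℓ)` -/
noncomputable def dct (k ℓ : ℕ) : ℕ := ((range ℓ).filter (fun i => D (k + i))).card

/-- signed prefix sum (ascent = +1, descent = −1) of the cut at `k` -/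
noncomputable def S (k t : ℕ) : ℤ := (t : ℤ) - 2 * dct D k t

def Per (M : ℕ) : Prop := ∀ u, D (u + M) ↔ D u

noncomputable def sig (M : ℕ) : ℤ := S D 0 M

noncomputable def T (M k : ℕ) : ℤ := (M : ℤ) * S D 0 k - sig D M * k

/-- the cut at `k` is good: the omitted letter matches the sign of `sig` -/
def good (M k : ℕ) : Prop := (if D (k + M - 1) then (-1 : ℤ) else 1) = sig D M

noncomputable def rk (M k : ℕ) : ℕ :=
  (((range M).filter (good D M)).filter (fun k' => T D M k' < T D M k)).card

/-- word-level exceedance of the cut at `k` : ascents strictly above the diagonal -/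
noncomputable def excw (n k : ℕ) : ℕ :=
  ((range (2*n)).filter (fun t => ¬ D (k + t) ∧ t < 2 * dct D k t)).card

variable {D}

lemma dct_succ (k t : ℕ) :
    dct D k (t+1) = dct D k t + (if D (k + t) then 1 else 0) := by
  unfold dct
  rw [range_add_one, filter_insert]
  split_ifs with h
  · rw [card_insert_of_notMem (by simp)]
  · simp

lemma dct_le (k t : ℕ) : dct D k t ≤ t := by
  simpa [dct] using (card_filter_le (range t) _)

lemma dct_mono (k : ℕ) {t t' : ℕ} (h : t ≤ t') : dct D k t ≤ dct D k t' := by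
  unfold dct
  exact card_le_card (filter_subset_filter _ (by simpa using range_subset_range.2 h))

lemma S_succ (k t : ℕ) :
    S D k (t+1) = S D k t + (if D (k + t) then -1 else 1) := by
  unfold S
  rw [dct_succ]
  split_ifs <;> push_cast <;> ring

lemma S_zero (k : ℕ) : S D k 0 = 0 := by simp [S, dct]

lemma S_add (k a b : ℕ) : S D k (a + b) = S D k a + S D (k + a) b := by
  induction b with
  | zero => simp [S_zero]
  | succ b ih =>
    have : k + (a + b) = k + a + b := by ring
    rw [show a + (b+1) = (a+b)+1 by ring, S_succ, ih, S_succ, this]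
    ring

lemma S_shift_period {M : ℕ} (hP : Per D M) (k t : ℕ) :
    S D (k + M) t = S D k t := by
  induction t with
  | zero => simp [S_zero]
  | succ t ih =>
    rw [S_succ, S_succ, ih]
    have : D (k + M + t) ↔ D (k + t) := by
      rw [show k + M + t = (k + t) + M by ring]; exact hP _
    simp only [this]

lemma S_window {M : ℕ} (hP : Per D M) (k : ℕ) : S D k M = sig D M := by
  induction k with
  | zero => rfl
  | succ k ih =>
    have h1 : S D k (M + 1) = S D k M + (if D (k + M) then (-1:ℤ) else 1) := S_succ k M
    have h2 : S D k (1 + M) = S D k 1 + S D (k+1) M := S_add k 1 M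
    have h3 : S D k 1 = (if D (k + 0) then (-1:ℤ) else 1) := by
      rw [show (1:ℕ) = 0 + 1 from rfl, S_succ, S_zero]; ring
    have h4 : D (k + M) ↔ D k := hP k
    rw [show M + 1 = 1 + M by ring] at h1
    rw [h2, h3] at h1
    have : D (k + 0) ↔ D k := by rw [Nat.add_zero]
    rw [ih] at *
    simp only [this, h4] at h1 ⊢
    omega

lemma S0_split (a b : ℕ) : S D 0 (a + b) = S D 0 a + S D a b := by
  simpa using S_add 0 a b

lemma S0_add_period {M : ℕ} (hP : Per D M) (a : ℕ) :
    S D 0 (a + M) = S D 0 a + sig D M := by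
  rw [S0_split, S_window hP]

lemma D_mod {M : ℕ} (hM : 0 < M) (hP : Per D M) (x : ℕ) : D x ↔ D (x % M) := by
  conv_lhs => rw [← Nat.mod_add_div x M]
  generalize x / M = q
  induction q with
  | zero => simp
  | succ q ih =>
    rw [show x % M + M * (q+1) = (x % M + M * q) + M by ring, hP]
    exact ih

lemma D_congr_mod {M : ℕ} (hM : 0 < M) (hP : Per D M) {x y : ℕ}
    (h : x % M = y % M) : D x ↔ D y := by
  rw [D_mod hM hP x, D_mod hM hP y, h]

lemma T_add_period {M : ℕ} (hP : Per D M) (a : ℕ) :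
    T D M (a + M) = T D M a := by
  unfold T
  rw [S0_add_period hP]
  push_cast
  ring

lemma T_mod {M : ℕ} (hM : 0 < M) (hP : Per D M) (x : ℕ) :
    T D M x = T D M (x % M) := by
  conv_lhs => rw [← Nat.mod_add_div x M]
  generalize x / M = q
  induction q with
  | zero => simp
  | succ q ih =>
    rw [show x % M + M * (q+1) = (x % M + M * q) + M by ring, T_add_period hP]
    exact ih

lemma T_congr_mod {M : ℕ} (hM : 0 < M) (hP : Per D M) {x y : ℕ}
    (h : x % M = y % M) : T D M x = T D M y := by
  rw [T_mod hM hP x, T_mod hM hP y, h]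

/-- the fundamental unrolling identity -/
lemma T_shift {M : ℕ} (k u : ℕ) :
    T D M (k + u) = T D M k + (M : ℤ) * S D k u - sig D M * u := by
  unfold T
  rw [S0_split]
  push_cast
  ring

lemma xcoord_mono (k : ℕ) {t t' : ℕ} (h : t ≤ t') :
    t - dct D k t ≤ t' - dct D k t' := by
  induction t' with
  | zero => omega
  | succ u ih =>
    rcases Nat.lt_or_ge t (u+1) with hlt | hge
    · have h1 := ih (by omega)
      have h2 := dct_succ (D := D) k u
      have h3 := dct_le (D := D) k u
      split_ifs at h2 <;> omega
    · have : t = u + 1 := by omega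
      subst this
      exact le_rfl

/-- path lemma: #levels strictly exceeded = #ascents strictly above the diagonal -/
lemma path_lemma (n k : ℕ) (hd : dct D k (2*n) = n) :
    ((range (n+1)).filter (fun i => ∃ ℓ ∈ range (2*n+1),
        ℓ - dct D k ℓ = i ∧ i < dct D k ℓ)).card
    = excw D n k := by
  classical
  rw [excw]
  refine (Finset.card_bij (fun t _ => t - dct D k t) ?_ ?_ ?_).symm
  · rintro t ht
    simp only [mem_filter, mem_range] at ht ⊢
    obtain ⟨htr, hasc, hup⟩ := ht
    have h1 : dct D k t ≤ n := hd ▸ dct_mono k (le_of_lt htr)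
    have h2 : dct D k t ≤ t := dct_le k t
    exact ⟨by omega, t, by omega, rfl, by omega⟩
  · intro t ht t' ht' heq
    simp only [mem_filter, mem_range] at ht ht'
    try simp only at heq
    by_contra hne
    have hl1 : dct D k t ≤ t := dct_le k t
    have hl2 : dct D k t' ≤ t' := dct_le k t'
    rcases Nat.lt_or_ge t t' with hlt | hge
    · have hk1 := dct_succ (D := D) k t
      rw [if_neg ht.2.1] at hk1
      have hm := xcoord_mono (D := D) k (show t + 1 ≤ t' by omega)
      have hl3 : dct D k (t+1) ≤ t+1 := dct_le k (t+1)
      omega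
    · have hk1 := dct_succ (D := D) k t'
      rw [if_neg ht'.2.1] at hk1
      have hm := xcoord_mono (D := D) k (show t' + 1 ≤ t by omega)
      have hl3 : dct D k (t'+1) ≤ t'+1 := dct_le k (t'+1)
      omega
  · rintro i hi
    simp only [mem_filter, mem_range] at hi
    obtain ⟨hin, ℓ, hℓ, hxi, hup⟩ := hi
    have hℓ2n : ℓ ≤ 2*n := by omega
    have hdn : dct D k ℓ ≤ n := hd ▸ dct_mono k hℓ2n
    have hup' : i < dct D k ℓ := hup
    have hi_lt : i < n := by omega
    set Q : ℕ → Prop := fun t => t - dct D k t = i with hQ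
    have hQℓ : Q ℓ := hxi
    have hPt0 : Q (Nat.findGreatest Q (2*n)) := Nat.findGreatest_spec hℓ2n hQℓ
    have hℓt0 : ℓ ≤ Nat.findGreatest Q (2*n) := Nat.le_findGreatest hℓ2n hQℓ
    have ht02n : Nat.findGreatest Q (2*n) ≤ 2*n := Nat.findGreatest_le _
    set t0 := Nat.findGreatest Q (2*n) with ht0def
    have hQt0 : t0 - dct D k t0 = i := hPt0
    have hdle := dct_le (D := D) k t0
    have ht0ne : t0 ≠ 2*n := by
      intro h
      rw [h] at hQt0
      rw [hd] at hQt0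
      omega
    have ht0lt : t0 < 2*n := by omega
    have hnQ : ¬ Q (t0 + 1) :=
      Nat.findGreatest_is_greatest (n := 2*n) (by rw [← ht0def]; omega) (by omega)
    have hnQ' : ¬ (t0 + 1 - dct D k (t0+1) = i) := hnQ
    have hdsucc := dct_succ (D := D) k t0
    have hasc : ¬ D (k + t0) := by
      intro h
      rw [if_pos h] at hdsucc
      exact hnQ' (by omega)
    have hdl : dct D k ℓ ≤ dct D k t0 := dct_mono k hℓt0
    exact ⟨t0, by simp only [mem_filter, mem_range]; exact ⟨ht0lt, hasc, by omega⟩, hQt0⟩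


/-- telescoping: for a balanced stretch, #(ascents from below 0) = #(descents to below 0) -/
lemma teles (k L : ℕ) (hret : S D k L = 0) :
    ((range L).filter (fun t => ¬ D (k + t) ∧ S D k t ≤ -1)).card
    = ((range L).filter (fun t => D (k + t) ∧ S D k (t+1) ≤ -1)).card := by
  classical
  suffices h : ∀ L', (∑ t ∈ range L', (if ¬ D (k + t) ∧ S D k t ≤ -1 then (1:ℤ) else 0))
      - (∑ t ∈ range L', (if D (k + t) ∧ S D k (t+1) ≤ -1 then (1:ℤ) else 0))
      = min (S D k L') 0 by
    have h2 := h L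
    rw [hret] at h2
    simp only [min_self] at h2
    simp only [Finset.sum_boole] at h2
    omega
  intro L'
  induction L' with
  | zero => simp [S_zero]
  | succ u ih =>
    rw [Finset.sum_range_succ, Finset.sum_range_succ]
    have hS := S_succ (D := D) k u
    by_cases hD : D (k + u)
    · rw [if_pos hD] at hS
      by_cases hneg : S D k (u+1) ≤ -1
      · rw [if_neg (fun hc => hc.1 hD), if_pos ⟨hD, hneg⟩]
        rw [min_def] at ih ⊢; split_ifs at * <;> omega
      · rw [if_neg (fun hc => hc.1 hD), if_neg (fun hc => hneg hc.2)]
        rw [min_def] at ih ⊢; split_ifs at * <;> omega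
    · rw [if_neg hD] at hS
      by_cases hneg : S D k u ≤ -1
      · rw [if_pos ⟨hD, hneg⟩, if_neg (fun hc => hD hc.1)]
        rw [min_def] at ih ⊢; split_ifs at * <;> omega
      · rw [if_neg (fun hc => hneg hc.2), if_neg (fun hc => hD hc.1)]
        rw [min_def] at ih ⊢; split_ifs at * <;> omega

lemma S_neg_iff (k t : ℕ) : S D k t ≤ -1 ↔ t < 2 * dct D k t := by
  unfold S
  omega

/-- reindexing: steps of the cut at `k` with low potential ↔ good cuts with low potential -/
lemma B_card {M : ℕ} (hM : 1 ≤ M) (hP : Per D M) {k : ℕ} (hk : k < M) :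
    ((range (M-1)).filter (fun t =>
        (if D (k + t) then (-1:ℤ) else 1) = sig D M ∧ T D M (k + t + 1) < T D M k)).card
    = rk D M k := by
  rw [rk, filter_filter]
  apply Finset.card_bij (fun t _ => (k + t + 1) % M)
  · rintro t ht
    simp only [mem_filter, mem_range] at ht ⊢
    obtain ⟨htr, hc1, hc2⟩ := ht
    have hmodeq : ((k + t + 1) % M + (M - 1)) % M = (k + t) % M := by
      have h1 : (k + t + 1) % M + (M-1) ≡ (k + t + 1) + (M-1) [MOD M] :=
        Nat.ModEq.add_right _ (Nat.mod_modEq _ _)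
      have h2 : (k + t + 1) + (M - 1) = (k + t) + M := by omega
      calc ((k + t + 1) % M + (M - 1)) % M
          = ((k + t + 1) + (M - 1)) % M := h1
        _ = ((k + t) + M) % M := by rw [h2]
        _ = (k + t) % M := Nat.add_mod_right _ _
    have hDiff : D ((k + t + 1) % M + M - 1) ↔ D (k + t) := by
      have : (k + t + 1) % M + M - 1 = (k + t + 1) % M + (M - 1) := by omega
      rw [this]
      exact D_congr_mod (by omega) hP hmodeq
    refine ⟨Nat.mod_lt _ (by omega), ?_, ?_⟩
    · rw [good, if_congr hDiff rfl rfl]; exact hc1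
    · rw [← T_mod (by omega) hP (k + t + 1)]; exact hc2
  · intro t ht t' ht' heq
    simp only [mem_filter, mem_range] at ht ht'
    have h1 : (k + 1) + t ≡ (k + 1) + t' [MOD M] := by
      have e : ∀ x, k + x + 1 = (k+1) + x := by omega
      rw [Nat.ModEq, ← e, ← e]
      exact heq
    have h2 : t ≡ t' [MOD M] := (Nat.ModEq.add_left_cancel' _ h1)
    rw [Nat.ModEq, Nat.mod_eq_of_lt (by omega), Nat.mod_eq_of_lt (by omega)] at h2
    exact h2
  · rintro b hb
    simp only [mem_filter, mem_range] at hb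
    obtain ⟨hbM, hgb, hTb⟩ := hb
    set t := (b + M - (k+1)) % M with htdef
    have hmap : (k + t + 1) % M = b := by
      have h1 : (k + 1) + t ≡ (k+1) + (b + M - (k+1)) [MOD M] :=
        Nat.ModEq.add_left _ (Nat.mod_modEq _ _)
      have h2 : (k+1) + (b + M - (k+1)) = b + M := by omega
      have : (k + t + 1) % M = (b + M) % M := by
        rw [show k + t + 1 = (k+1) + t by omega]
        rw [h1, h2]
      rw [this, Nat.add_mod_right, Nat.mod_eq_of_lt hbM]
    have htM : t < M := Nat.mod_lt _ (by omega)
    have htne : t ≠ M - 1 := by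
      intro h
      have : (k + (M-1) + 1) % M = b := h ▸ hmap
      rw [show k + (M-1) + 1 = k + M by omega, Nat.add_mod_right,
        Nat.mod_eq_of_lt hk] at this
      rw [← this] at hTb
      exact lt_irrefl _ hTb
    have hktb : (k + t) % M = (b + M - 1) % M := by
      have h1 : k + t ≡ k + (b + M - (k+1)) [MOD M] :=
        Nat.ModEq.add_left _ (Nat.mod_modEq _ _)
      have h2 : k + (b + M - (k+1)) = b + M - 1 := by omega
      rw [Nat.ModEq, h2] at h1
      exact h1
    refine ⟨t, ?_, hmap⟩
    simp only [mem_filter, mem_range]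
    refine ⟨by omega, ?_, ?_⟩
    · rw [good] at hgb
      rw [if_congr (D_congr_mod (by omega) hP (show (k+t) % M = (b + M -1) % M from hktb)) rfl rfl]
      exact hgb
    · rw [T_mod (by omega) hP (k+t+1), show (k+t+1) % M = b from hmap, ← Nat.mod_eq_of_lt hbM,
        ← T_mod (by omega) hP b]
      exact hTb

/-- The cycle lemma: for a good cut, the exceedance equals the rank of the cut's potential. -/
lemma excw_eq_rk {n M : ℕ} (hMdef : M = 2*n+1) (hP : Per D M)
    (hσ : sig D M = 1 ∨ sig D M = -1) {k : ℕ} (hk : k < M) (hgood : good D M k) :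
    excw D n k = rk D M k := by
  have hM1 : (1:ℕ) ≤ M := by omega
  have hMn : M - 1 = 2*n := by omega
  rw [← B_card hM1 hP hk, excw, ← hMn]
  have hTs : ∀ t : ℕ, T D M (k + t + 1) - T D M k
      = (M:ℤ) * S D k (t+1) - sig D M * (t+1) := by
    intro t
    have := T_shift (D := D) (M := M) k (t+1)
    rw [show k + (t+1) = k + t + 1 by omega] at this
    rw [this]; push_cast; ring
  rcases hσ with hσ1 | hσ1
  · -- σ = 1 : the two filters are pointwise equivalent
    apply congrArg
    apply Finset.filter_congr
    intro t ht
    simp only [mem_range] at ht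
    have hSsucc := S_succ (D := D) k t
    constructor
    · rintro ⟨hasc, hup⟩
      have hS1 : S D k t ≤ -1 := (S_neg_iff k t).2 hup
      rw [if_neg hasc] at hSsucc
      refine ⟨by rw [if_neg hasc, hσ1], ?_⟩
      have hMS : (M:ℤ) * S D k (t+1) ≤ 0 := by
        have h0 : S D k (t+1) ≤ 0 := by omega
        have := mul_le_mul_of_nonneg_left h0 (show (0:ℤ) ≤ M by positivity)
        simpa using this
      have := hTs t
      rw [hσ1] at this
      have ht1 : (0:ℤ) < (t:ℤ) + 1 := by positivity
      omega
    · rintro ⟨hite, hT⟩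
      have hasc : ¬ D (k + t) := by
        intro h
        rw [if_pos h, hσ1] at hite
        norm_num at hite
      rw [if_neg hasc] at hSsucc
      refine ⟨hasc, (S_neg_iff k t).1 ?_⟩
      have hts := hTs t
      rw [hσ1] at hts
      have hTlt : (M:ℤ) * S D k (t+1) < (t:ℤ)+1 := by omega
      have htM : ((t:ℤ)+1) ≤ M := by
        have : t + 1 ≤ M - 1 := by omega
        push_cast
        omega
      by_contra hcon
      push_neg at hcon
      have h1 : (1:ℤ) ≤ S D k (t+1) := by omega
      have h2 := mul_le_mul_of_nonneg_left h1 (show (0:ℤ) ≤ M by positivity)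
      simp only [mul_one] at h2
      linarith
  · -- σ = -1
    have hDlast : D (k + M - 1) := by
      by_contra h
      rw [good, if_neg h, hσ1] at hgood
      norm_num at hgood
    have hret : S D k (M-1) = 0 := by
      have hw := S_window hP k
      have hs := S_succ (D := D) k (M-1)
      rw [show (M-1)+1 = M by omega] at hs
      rw [if_pos (show D (k + (M-1)) by rw [show k + (M-1) = k + M - 1 by omega]; exact hDlast)] at hs
      rw [hσ1] at hw
      omega
    have e1 : ((range (M-1)).filter (fun t => ¬ D (k+t) ∧ t < 2 * dct D k t)).card
        = ((range (M-1)).filter (fun t => ¬ D (k+t) ∧ S D k t ≤ -1)).card := by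
      apply congrArg
      apply Finset.filter_congr
      intro t _
      rw [S_neg_iff]
    have e3 : ((range (M-1)).filter (fun t => D (k+t) ∧ S D k (t+1) ≤ -1))
        = ((range (M-1)).filter (fun t =>
            (if D (k + t) then (-1:ℤ) else 1) = sig D M ∧ T D M (k + t + 1) < T D M k)) := by
      apply Finset.filter_congr
      intro t ht
      simp only [mem_range] at ht
      have hts := hTs t
      rw [hσ1] at hts
      have htM : ((t:ℤ)+1) ≤ (M:ℤ) - 1 := by
        have : t + 1 ≤ M - 1 := by omega
        push_cast
        omega
      constructor
      · rintro ⟨hD, hS⟩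
        refine ⟨by rw [if_pos hD, hσ1], ?_⟩
        have h2 := mul_le_mul_of_nonneg_left hS (show (0:ℤ) ≤ M by positivity)
        push_cast at hts ⊢
        nlinarith
      · rintro ⟨hite, hT⟩
        have hD : D (k + t) := by
          by_contra h
          rw [if_neg h, hσ1] at hite
          norm_num at hite
        refine ⟨hD, ?_⟩
        by_contra hcon
        push_neg at hcon
        have h1 : (0:ℤ) ≤ S D k (t+1) := by omega
        have h2 := mul_le_mul_of_nonneg_left h1 (show (0:ℤ) ≤ M by positivity)
        simp only [mul_zero] at h2
        push_cast at hts
        nlinarith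
    rw [e1, teles k (M-1) hret, e3]

section Rank
variable {α : Type*} (s : Finset α) (f : α → ℤ)

noncomputable def rnk (a : α) : ℕ := (s.filter (fun x => f x < f a)).card

lemma rnk_lt {a : α} (ha : a ∈ s) : rnk s f a < s.card := by
  apply Finset.card_lt_card
  constructor
  · exact filter_subset _ _
  · intro hsub
    have := hsub ha
    simp only [mem_filter] at this
    exact lt_irrefl _ this.2

lemma rnk_strictmono {a b : α} (ha : a ∈ s) (hb : b ∈ s) (hab : f a < f b) :
    rnk s f a < rnk s f b := by
  apply Finset.card_lt_card
  constructor
  · intro x hx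
    simp only [mem_filter] at hx ⊢
    exact ⟨hx.1, hx.2.trans hab⟩
  · intro hsub
    have := hsub (by simp only [mem_filter]; exact ⟨ha, hab⟩)
    simp only [mem_filter] at this
    exact lt_irrefl _ this.2

lemma rnk_injOn (hf : ∀ a ∈ s, ∀ b ∈ s, f a = f b → a = b)
    {a b : α} (ha : a ∈ s) (hb : b ∈ s) (h : rnk s f a = rnk s f b) : a = b := by
  rcases lt_trichotomy (f a) (f b) with hlt | heq | hgt
  · exact absurd h (Nat.ne_of_lt (rnk_strictmono s f ha hb hlt))
  · exact hf a ha b hb heq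
  · exact absurd h.symm (Nat.ne_of_lt (rnk_strictmono s f hb ha hgt))

lemma rnk_surj (hf : ∀ a ∈ s, ∀ b ∈ s, f a = f b → a = b) :
    ∀ j < s.card, ∃ a ∈ s, rnk s f a = j := by
  intro j hj
  have := Finset.surj_on_of_inj_on_of_card_le (s := s) (t := range s.card)
    (fun a _ => rnk s f a) (fun a ha => by simp only [mem_range]; exact rnk_lt s f ha)
    (fun a b ha hb hab => rnk_injOn s f hf ha hb hab)
    (by simp)
  obtain ⟨a, ha, hval⟩ := this j (by simpa using hj)
  exact ⟨a, ha, hval.symm⟩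

end Rank



lemma T_injOn {M : ℕ} (hσ : sig D M = 1 ∨ sig D M = -1) {a b : ℕ}
    (ha : a < M) (hb : b < M) (hT : T D M a = T D M b) : a = b := by
  rw [T, T] at hT
  have haZ : (a:ℤ) < M := by exact_mod_cast ha
  have hbZ : (b:ℤ) < M := by exact_mod_cast hb
  have ha0 : (0:ℤ) ≤ a := by positivity
  have hb0 : (0:ℤ) ≤ b := by positivity
  have hMne : M ≠ 0 := by
    rintro rfl
    rcases hσ with h | h <;> simp [sig, S_zero] at h
  have hM0 : (0:ℤ) < M := by
    have := Nat.pos_of_ne_zero hMne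
    exact_mod_cast this
  set q : ℤ := S D 0 a - S D 0 b with hq
  have key : sig D M * ((a:ℤ) - b) = (M:ℤ) * q := by
    rw [hq]; ring_nf; linarith [hT]
  have habs : (a:ℤ) - b = 0 := by
    rcases hσ with h | h <;> rw [h] at key <;>
    · rcases lt_trichotomy q 0 with hq1 | hq1 | hq1
      · nlinarith
      · rw [hq1] at key; linarith
      · nlinarith
  omega

lemma good_card {n M : ℕ} (hMdef : M = 2*n+1) (hP : Per D M)
    (hσ : sig D M = 1 ∨ sig D M = -1) :
    ((range M).filter (good D M)).card = n + 1 := by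
  have hM0 : 0 < M := by omega
  have e1 : ((range M).filter (good D M)).card
      = ((range M).filter (fun m => (if D m then (-1:ℤ) else 1) = sig D M)).card := by
    apply Finset.card_bij (fun k _ => (k + (M-1)) % M)
    · intro k hk
      simp only [mem_filter, mem_range] at hk ⊢
      refine ⟨Nat.mod_lt _ hM0, ?_⟩
      have hcong : ((k + (M-1)) % M) % M = (k + M - 1) % M := by
        rw [Nat.mod_mod_of_dvd _ (dvd_refl M), show k + (M-1) = k + M - 1 by omega]
      rw [if_congr (D_congr_mod hM0 hP hcong) rfl rfl]
      exact hk.2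
    · intro a ha b hb heq
      simp only [mem_filter, mem_range] at ha hb
      have h1 : a + (M-1) ≡ b + (M-1) [MOD M] := heq
      have h2 : a ≡ b [MOD M] := Nat.ModEq.add_right_cancel' _ h1
      rw [Nat.ModEq, Nat.mod_eq_of_lt ha.1, Nat.mod_eq_of_lt hb.1] at h2
      exact h2
    · intro m hm
      simp only [mem_filter, mem_range] at hm
      refine ⟨(m+1) % M, ?_, ?_⟩
      · simp only [mem_filter, mem_range]
        refine ⟨Nat.mod_lt _ hM0, ?_⟩
        have hcong : ((m+1) % M + M - 1) % M = m % M := by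
          have hstep : (m+1) % M + (M-1) ≡ (m+1) + (M-1) [MOD M] :=
            Nat.ModEq.add_right _ (Nat.mod_modEq _ _)
          have : (m+1) + (M-1) = m + M := by omega
          rw [this] at hstep
          rw [show (m+1) % M + M - 1 = (m+1) % M + (M-1) by omega]
          rw [Nat.ModEq] at hstep
          rw [hstep, Nat.add_mod_right]

        rw [good, if_congr (D_congr_mod hM0 hP hcong) rfl rfl]
        exact hm.2
      · have hstep : (m+1) % M + (M-1) ≡ (m+1) + (M-1) [MOD M] :=
          Nat.ModEq.add_right _ (Nat.mod_modEq _ _)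
        have h2 : (m+1) + (M-1) = m + M := by omega
        rw [h2] at hstep
        rw [Nat.ModEq] at hstep
        rw [hstep, Nat.add_mod_right, Nat.mod_eq_of_lt hm.1]
  rw [e1]
  have hsig : sig D M = (M:ℤ) - 2*(dct D 0 M) := rfl
  have hc : dct D 0 M = ((range M).filter D).card := by
    unfold dct
    apply congrArg
    apply Finset.filter_congr
    intro x _
    rw [zero_add]
  have hsplit : ((range M).filter D).card + ((range M).filter (fun a => ¬ D a)).card = M := by
    rw [Finset.card_filter_add_card_filter_not, card_range]
  rcases hσ with h | h
  · have e2 : (range M).filter (fun m => (if D m then (-1:ℤ) else 1) = sig D M)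
        = (range M).filter (fun m => ¬ D m) := by
      apply Finset.filter_congr
      intro m _
      rw [h]
      constructor
      · intro hite hD
        rw [if_pos hD] at hite
        norm_num at hite
      · intro hD
        rw [if_neg hD]
    rw [e2]
    rw [h, hc] at hsig
    have : (M:ℤ) = 2*n+1 := by exact_mod_cast congrArg (Nat.cast : ℕ → ℤ) hMdef
    omega
  · have e2 : (range M).filter (fun m => (if D m then (-1:ℤ) else 1) = sig D M)
        = (range M).filter D := by
      apply Finset.filter_congr
      intro m _
      rw [h]
      constructor
      · intro hite
        by_contra hD
        rw [if_neg hD] at hite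
        norm_num at hite
      · intro hD
        rw [if_pos hD]
    rw [e2]
    rw [h, hc] at hsig
    have : (M:ℤ) = 2*n+1 := by exact_mod_cast congrArg (Nat.cast : ℕ → ℤ) hMdef
    omega

lemma rk_eq_rnk {M k : ℕ} : rk D M k = rnk ((range M).filter (good D M)) (T D M) k := rfl

lemma rk_inj {M : ℕ} (hσ : sig D M = 1 ∨ sig D M = -1) {a b : ℕ}
    (ha : a < M) (hga : good D M a) (hb : b < M) (hgb : good D M b)
    (h : rk D M a = rk D M b) : a = b := by
  rw [rk_eq_rnk, rk_eq_rnk] at h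
  exact rnk_injOn _ _
    (fun x hx y hy hxy => T_injOn hσ (by simpa using (mem_filter.1 hx).1)
      (by simpa using (mem_filter.1 hy).1) hxy)
    (by simp [mem_filter, ha, hga]) (by simp [mem_filter, hb, hgb]) h

lemma rk_exists {n M : ℕ} (hMdef : M = 2*n+1) (hP : Per D M)
    (hσ : sig D M = 1 ∨ sig D M = -1) {j : ℕ} (hj : j ≤ n) :
    ∃ k, k < M ∧ good D M k ∧ rk D M k = j := by
  have := rnk_surj ((range M).filter (good D M)) (T D M)
    (fun x hx y hy hxy => T_injOn hσ (by simpa using (mem_filter.1 hx).1)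
      (by simpa using (mem_filter.1 hy).1) hxy) j
    (by rw [good_card hMdef hP hσ]; omega)
  obtain ⟨k, hk, hrk⟩ := this
  simp only [mem_filter, mem_range] at hk
  exact ⟨k, hk.1, hk.2, by rw [rk_eq_rnk]; exact hrk⟩

open Fin.NatCast Fin.CommRing

variable {n : ℕ}

noncomputable def Dp (w : Equiv.Perm (Fin (2*n+1))) : ℕ → Prop :=
  fun u => w ((u : Fin (2*n+1)) + 1) < w (u : Fin (2*n+1))

noncomputable def rot (k : ℕ) (w : Equiv.Perm (Fin (2*n+1))) : Equiv.Perm (Fin (2*n+1)) :=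
  (Equiv.addRight ((k : Fin (2*n+1)))).trans w

lemma rot_apply (k : ℕ) (w : Equiv.Perm (Fin (2*n+1))) (x : Fin (2*n+1)) :
    rot k w x = w (x + (k : Fin (2*n+1))) := rfl

lemma castmod (a : ℕ) : ((a % (2*n+1) : ℕ) : Fin (2*n+1)) = (a : Fin (2*n+1)) := by
  conv_rhs => rw [← Nat.mod_add_div a (2*n+1)]
  rw [Nat.cast_add, Nat.cast_mul, Fin.natCast_self, zero_mul, add_zero]

lemma Dp_per (w : Equiv.Perm (Fin (2*n+1))) : Per (Dp w) (2*n+1) := by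
  intro u
  unfold Dp
  rw [show ((u + (2*n+1) : ℕ) : Fin (2*n+1)) = (u : Fin (2*n+1)) by
    rw [Nat.cast_add, Fin.natCast_self, add_zero]]

lemma rot_zero (w : Equiv.Perm (Fin (2*n+1))) : rot 0 w = w := by
  apply Equiv.ext
  intro x
  rw [rot_apply]
  norm_num

lemma rot_rot (a b : ℕ) (w : Equiv.Perm (Fin (2*n+1))) :
    rot a (rot b w) = rot (a + b) w := by
  apply Equiv.ext
  intro x
  rw [rot_apply, rot_apply, rot_apply]
  congr 1
  push_cast
  ring

lemma rot_mod (a : ℕ) (w : Equiv.Perm (Fin (2*n+1))) :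
    rot (a % (2*n+1)) w = rot a w := by
  unfold rot
  rw [castmod]

lemma descentsIn_rot (k : ℕ) (w : Equiv.Perm (Fin (2*n+1))) {ℓ : ℕ} (hℓ : ℓ ≤ 2*n) :
    descentsIn (rot k w) ℓ = dct (Dp w) k ℓ := by
  unfold descentsIn dct
  apply congrArg
  apply Finset.filter_congr
  intro i hi
  simp only [mem_range] at hi
  have hi1 : i + 1 < 2*n+1 := by omega
  have e0 : (⟨i, Nat.lt_of_succ_lt hi1⟩ : Fin (2*n+1)) + (k : Fin (2*n+1))
      = ((k + i : ℕ) : Fin (2*n+1)) := by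
    have : (⟨i, Nat.lt_of_succ_lt hi1⟩ : Fin (2*n+1)) = ((i:ℕ) : Fin (2*n+1)) :=
      Fin.ext (by rw [Fin.val_cast_of_lt (by omega)])
    rw [this]
    push_cast
    ring
  have e1 : (⟨i + 1, hi1⟩ : Fin (2*n+1)) + (k : Fin (2*n+1))
      = ((k + i : ℕ) : Fin (2*n+1)) + 1 := by
    have : (⟨i + 1, hi1⟩ : Fin (2*n+1)) = ((i+1:ℕ) : Fin (2*n+1)) :=
      Fin.ext (by rw [Fin.val_cast_of_lt (by omega)])
    rw [this]
    push_cast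
    ring
  constructor
  · rintro ⟨h, hlt⟩
    rw [rot_apply, rot_apply, e0, e1] at hlt
    exact hlt
  · intro h
    refine ⟨hi1, ?_⟩
    rw [rot_apply, rot_apply, e0, e1]
    exact h

lemma descents_rot (k : ℕ) (w : Equiv.Perm (Fin (2*n+1))) :
    descents (rot k w) = dct (Dp w) k (2*n) := by
  unfold descents
  rw [show (2*n+1) - 1 = 2*n by omega]
  exact descentsIn_rot k w (le_refl _)

lemma descents_eq (w : Equiv.Perm (Fin (2*n+1))) :
    descents w = dct (Dp w) 0 (2*n) := by
  conv_lhs => rw [← rot_zero w]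
  exact descents_rot 0 w


lemma dct_window {D : ℕ → Prop} {M : ℕ} (hP : Per D M) (k : ℕ) :
    dct D k M = dct D 0 M := by
  have h := S_window hP k
  simp only [S, sig] at h
  omega

lemma descentsIn_mono {N : ℕ} (w : Equiv.Perm (Fin N)) {a b : ℕ} (h : a ≤ b) :
    descentsIn w a ≤ descentsIn w b := by
  unfold descentsIn
  exact card_le_card (filter_subset_filter _ (by simpa using Finset.range_subset_range.2 h))

lemma orbit_setup {n : ℕ} (hn : 1 ≤ n) (w : Equiv.Perm (Fin (2*n+1)))
    (hw : descents w = n) :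
    (sig (Dp w) (2*n+1) = 1 ∨ sig (Dp w) (2*n+1) = -1)
    ∧ ∀ k : ℕ, (descents (rot k w) = n ↔ good (Dp w) (2*n+1) k) := by
  have hP := Dp_per w
  have hsig : sig (Dp w) (2*n+1) = ((2*n+1 : ℕ):ℤ) - 2*(dct (Dp w) 0 (2*n+1)) := rfl
  have h0 : ∀ k : ℕ, descents (rot k w)
      = dct (Dp w) 0 (2*n+1) - (if Dp w (k + 2*n) then 1 else 0)
      ∧ (if Dp w (k + 2*n) then 1 else 0) ≤ dct (Dp w) 0 (2*n+1) := by
    intro k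
    have h1 := dct_succ (D := Dp w) k (2*n)
    have h2 := dct_window hP k
    have h3 := descents_rot k w
    split_ifs at h1 ⊢ <;> omega
  have hw0 : dct (Dp w) 0 (2*n) = n := by rw [← descents_eq w]; exact hw
  have hcase : dct (Dp w) 0 (2*n+1) = n ∨ dct (Dp w) 0 (2*n+1) = n + 1 := by
    have h1 := dct_succ (D := Dp w) 0 (2*n)
    split_ifs at h1 <;> omega
  constructor
  · rcases hcase with hc | hc <;> rw [hsig, hc] <;> [left; right] <;> push_cast <;> ring
  · intro k
    have hidx : k + (2*n+1) - 1 = k + 2*n := by omega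
    rw [good, hidx]
    obtain ⟨hdval, hdle⟩ := h0 k
    rcases hcase with hc | hc
    · have hsv : sig (Dp w) (2*n+1) = 1 := by rw [hsig, hc]; push_cast; ring
      rw [hsv]
      split_ifs with hD
      · rw [hc] at hdval
        constructor
        · intro h; rw [if_pos hD] at hdval; omega
        · intro h; norm_num at h
      · rw [hc, if_neg hD] at hdval
        simp only [Nat.sub_zero] at hdval
        exact ⟨fun _ => rfl, fun _ => hdval⟩
    · have hsv : sig (Dp w) (2*n+1) = -1 := by rw [hsig, hc]; push_cast; ring
      rw [hsv]
      split_ifs with hD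
      · rw [hc, if_pos hD] at hdval
        exact ⟨fun _ => rfl, fun _ => by omega⟩
      · rw [hc, if_neg hD] at hdval
        constructor
        · intro h; omega
        · intro h; norm_num at h

lemma excPath_rot {n : ℕ} (w : Equiv.Perm (Fin (2*n+1))) (k : ℕ)
    (hgd : descents (rot k w) = n) :
    excPath n (rot k w) = excw (Dp w) n k := by
  have hd : dct (Dp w) k (2*n) = n := by rw [← descents_rot]; exact hgd
  rw [← path_lemma n k hd]
  unfold excPath
  have hpred : (fun i => ∃ ℓ ∈ range (2*n+1),
        ℓ - descentsIn (rot k w) ℓ = i ∧ i < descentsIn (rot k w) ℓ)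
      = (fun i => ∃ ℓ ∈ range (2*n+1), ℓ - dct (Dp w) k ℓ = i ∧ i < dct (Dp w) k ℓ) := by
    funext i
    apply propext
    constructor <;> rintro ⟨ℓ, hℓ, h1, h2⟩ <;> refine ⟨ℓ, hℓ, ?_, ?_⟩ <;>
      simp only [mem_range] at hℓ
    · rw [← descentsIn_rot k w (show ℓ ≤ 2*n by omega)]; exact h1
    · rw [← descentsIn_rot k w (show ℓ ≤ 2*n by omega)]; exact h2
    · rw [descentsIn_rot k w (show ℓ ≤ 2*n by omega)]; exact h1
    · rw [descentsIn_rot k w (show ℓ ≤ 2*n by omega)]; exact h2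
  simp only [hpred]
  congr!

lemma exc_rot_eq_rk {n : ℕ} (hn : 1 ≤ n) (w : Equiv.Perm (Fin (2*n+1)))
    (hw : descents w = n) (a : ℕ) (hda : descents (rot a w) = n) :
    excPath n (rot a w) = rk (Dp w) (2*n+1) (a % (2*n+1)) := by
  obtain ⟨hσ, hgood⟩ := orbit_setup hn w hw
  have hda' : descents (rot (a % (2*n+1)) w) = n := by rw [rot_mod]; exact hda
  have hga : good (Dp w) (2*n+1) (a % (2*n+1)) := (hgood _).1 hda'
  have h1 : excPath n (rot a w) = excw (Dp w) n (a % (2*n+1)) := by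
    rw [← rot_mod]
    exact excPath_rot w _ hda'
  rw [h1]
  exact excw_eq_rk rfl (Dp_per w) hσ (Nat.mod_lt _ (by omega)) hga

lemma rot_eq_of_exc {n : ℕ} (hn : 1 ≤ n) (w : Equiv.Perm (Fin (2*n+1)))
    (hw : descents w = n) {a b : ℕ}
    (hda : descents (rot a w) = n) (hdb : descents (rot b w) = n)
    (hexc : excPath n (rot a w) = excPath n (rot b w)) : rot a w = rot b w := by
  obtain ⟨hσ, hgood⟩ := orbit_setup hn w hw
  have hea := exc_rot_eq_rk hn w hw a hda
  have heb := exc_rot_eq_rk hn w hw b hdb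
  have hga : good (Dp w) (2*n+1) (a % (2*n+1)) :=
    (hgood _).1 (by rw [rot_mod]; exact hda)
  have hgb : good (Dp w) (2*n+1) (b % (2*n+1)) :=
    (hgood _).1 (by rw [rot_mod]; exact hdb)
  have hmod : a % (2*n+1) = b % (2*n+1) := by
    apply rk_inj hσ (Nat.mod_lt _ (by omega)) hga (Nat.mod_lt _ (by omega)) hgb
    rw [← hea, ← heb, hexc]
  rw [← rot_mod a, ← rot_mod b, hmod]

end EC

/-- The number of permutations `w ∈ S_{2n+1}` with `n` descents whose lattice
path has exactly `j` exceedances is independent of `j ∈ {0,…,n}`, being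
equal to the Eulerian-Catalan number `A(n,2n+1)/(n+1)`. -/
theorem card_perm_exc_eq_eulerianCatalan (n j : ℕ) (hn : 1 ≤ n) (hj : j ≤ n) :
    (Finset.univ.filter (fun w : Equiv.Perm (Fin (2 * n + 1)) =>
        descents w = n ∧ excPath n w = j)).card
      = eulerian n (2 * n + 1) / (n + 1) := by
  classical
  -- the chosen good rotation with prescribed rank is well behaved
  have hprop : ∀ (w : Equiv.Perm (Fin (2*n+1))), descents w = n →
      ∀ j2 k, k < 2*n+1 → EC.good (EC.Dp w) (2*n+1) k → EC.rk (EC.Dp w) (2*n+1) k = j2 →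
      descents (EC.rot k w) = n ∧ excPath n (EC.rot k w) = j2 := by
    intro w hw j2 k hk hg hr
    obtain ⟨hσ, hgood⟩ := EC.orbit_setup hn w hw
    have hd : descents (EC.rot k w) = n := (hgood k).2 hg
    refine ⟨hd, ?_⟩
    rw [EC.exc_rot_eq_rk hn w hw k hd, Nat.mod_eq_of_lt hk, hr]
  have hex : ∀ j2, j2 ≤ n → ∀ w : Equiv.Perm (Fin (2*n+1)), descents w = n →
      ∃ k, k < 2*n+1 ∧ EC.good (EC.Dp w) (2*n+1) k ∧ EC.rk (EC.Dp w) (2*n+1) k = j2 :=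
    fun j2 hj2 w hw => EC.rk_exists rfl (EC.Dp_per w) (EC.orbit_setup hn w hw).1 hj2
  -- undoing a rotation
  have hundo : ∀ (w : Equiv.Perm (Fin (2*n+1))) (k : ℕ),
      EC.rot ((2*n+1) - k % (2*n+1)) (EC.rot k w) = w := by
    intro w k
    rw [← EC.rot_mod k w, EC.rot_rot]
    have h1 : (2*n+1) - k % (2*n+1) + k % (2*n+1) = 2*n+1 := by
      have := Nat.mod_lt k (show 0 < 2*n+1 by omega)
      omega
    rw [h1, ← EC.rot_mod, Nat.mod_self, EC.rot_zero]
  -- all fibers have the same cardinality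
  have hAeq : ∀ j2, j2 ≤ n →
      (Finset.univ.filter (fun w : Equiv.Perm (Fin (2 * n + 1)) =>
        descents w = n ∧ excPath n w = j)).card
      = (Finset.univ.filter (fun w : Equiv.Perm (Fin (2 * n + 1)) =>
        descents w = n ∧ excPath n w = j2)).card := by
    intro j2 hj2
    apply Finset.card_bij
      (fun w hw => EC.rot (Classical.choose
        (hex j2 hj2 w (Finset.mem_filter.1 hw).2.1)) w)
    · intro w hw
      obtain ⟨hw1, hw2⟩ := (Finset.mem_filter.1 hw).2
      obtain ⟨hk, hg, hr⟩ := Classical.choose_spec (hex j2 hj2 w hw1)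
      obtain ⟨hd, he⟩ := hprop w hw1 j2 _ hk hg hr
      exact Finset.mem_filter.2 ⟨Finset.mem_univ _, hd, he⟩
    · intro w1 hw1 w2 hw2 heq
      obtain ⟨hw11, hw12⟩ := (Finset.mem_filter.1 hw1).2
      obtain ⟨hw21, hw22⟩ := (Finset.mem_filter.1 hw2).2
      set k1 := Classical.choose (hex j2 hj2 w1 (Finset.mem_filter.1 hw1).2.1) with hk1def
      set k2 := Classical.choose (hex j2 hj2 w2 (Finset.mem_filter.1 hw2).2.1) with hk2def
      have hw2eq : w2 = EC.rot ((2*n+1) - k2 % (2*n+1)) (EC.rot k1 w1) := by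
        rw [heq, hundo]
      rw [EC.rot_rot] at hw2eq
      set s := (2*n+1) - k2 % (2*n+1) + k1 with hsdef
      have hds : descents (EC.rot s w1) = n := by rw [← hw2eq]; exact hw21
      have hes : excPath n (EC.rot s w1) = j := by rw [← hw2eq]; exact hw22
      have h0 : EC.rot s w1 = EC.rot 0 w1 := by
        apply EC.rot_eq_of_exc hn w1 hw11 hds
        · rw [EC.rot_zero]; exact hw11
        · rw [EC.rot_zero, hes, hw12]
      rw [hw2eq, h0, EC.rot_zero]
    · intro v hv
      obtain ⟨hv1, hv2⟩ := (Finset.mem_filter.1 hv).2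
      obtain ⟨k1, hk1, hg1, hr1⟩ := hex j hj v hv1
      obtain ⟨hdw, hew⟩ := hprop v hv1 j k1 hk1 hg1 hr1
      have hwmem : EC.rot k1 v ∈ Finset.univ.filter
          (fun w : Equiv.Perm (Fin (2 * n + 1)) => descents w = n ∧ excPath n w = j) :=
        Finset.mem_filter.2 ⟨Finset.mem_univ _, hdw, hew⟩
      refine ⟨EC.rot k1 v, hwmem, ?_⟩
      set kst := Classical.choose (hex j2 hj2 (EC.rot k1 v) (Finset.mem_filter.1 hwmem).2.1)
      obtain ⟨hkst, hgst, hrst⟩ :=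
        Classical.choose_spec (hex j2 hj2 (EC.rot k1 v) (Finset.mem_filter.1 hwmem).2.1)
      obtain ⟨hd2, he2⟩ := hprop (EC.rot k1 v) hdw j2 kst hkst hgst hrst
      rw [EC.rot_rot] at hd2 he2 ⊢
      have hfin : EC.rot (kst + k1) v = EC.rot 0 v := by
        apply EC.rot_eq_of_exc hn v hv1 hd2
        · rw [EC.rot_zero]; exact hv1
        · rw [EC.rot_zero, he2, hv2]
      rw [hfin, EC.rot_zero]
  -- excPath is at most n on permutations with n descents
  have hexcle : ∀ w : Equiv.Perm (Fin (2*n+1)), descents w = n → excPath n w ≤ n := by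
    intro w hw
    have hsub : (Finset.range (n+1)).filter (fun i => ∃ ℓ ∈ Finset.range (2*n+1),
        ℓ - descentsIn w ℓ = i ∧ i < descentsIn w ℓ) ⊆ Finset.range n := by
      intro i hi
      simp only [Finset.mem_filter, Finset.mem_range] at hi ⊢
      obtain ⟨hi1, ℓ, hℓ, h1, h2⟩ := hi
      have hℓ' : ℓ < 2*n+1 := by simpa using hℓ
      have hmono : descentsIn w ℓ ≤ descents w := by
        unfold descents
        exact EC.descentsIn_mono w (by omega)
      omega
    calc excPath n w ≤ (Finset.range n).card := Finset.card_le_card hsub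
      _ = n := Finset.card_range n
  -- fiberwise count
  have hfib := Finset.card_eq_sum_card_fiberwise
    (f := fun w : Equiv.Perm (Fin (2*n+1)) => excPath n w)
    (s := Finset.univ.filter (fun w : Equiv.Perm (Fin (2*n+1)) => descents w = n))
    (t := Finset.range (n+1))
    (fun w hw => by
      simp only [Finset.mem_filter, Finset.coe_filter, Set.mem_setOf_eq] at hw
      simp only [Finset.mem_range, Finset.coe_range, Set.mem_Iio]
      exact Nat.lt_succ_of_le (hexcle w hw.2))
  have htot : eulerian n (2*n+1)
      = (n+1) * (Finset.univ.filter (fun w : Equiv.Perm (Fin (2 * n + 1)) =>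
          descents w = n ∧ excPath n w = j)).card := by
    rw [eulerian, hfib]
    have hterm : ∀ b ∈ Finset.range (n+1),
        ((Finset.univ.filter (fun w : Equiv.Perm (Fin (2*n+1)) => descents w = n)).filter
          (fun w => excPath n w = b)).card
        = (Finset.univ.filter (fun w : Equiv.Perm (Fin (2 * n + 1)) =>
            descents w = n ∧ excPath n w = j)).card := by
      intro b hb
      simp only [Finset.mem_range] at hb
      rw [Finset.filter_filter]
      exact (hAeq b (by omega)).symm
    rw [Finset.sum_congr rfl hterm, Finset.sum_const, Finset.card_range, smul_eq_mul]
  rw [htot, Nat.mul_div_cancel_left _ (show 0 < n+1 by omega)]
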